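/- Fix an integer n ≥ 2, reals p_1,…,p_n with p_k ≥ 1, and reals σ_1,…,σ_n. Let (u,v) ∈ ℝ₊ × ℝ be such that there exists a tuple (u_1,…,u_n) with 0 ≤ u_k ≤ p_k for all k, Σ_{k=1}^n u_k = u and Σ_{k=1}^n σ_k u_k = v. Then the problem of minimizing Σ_{k=1}^n p_k · E_FD(u_k/p_k) over tuples (u_1,…,u_n) of nonnegative reals satisfying Σ_{k=1}^n u_k = u and Σ_{k=1}^n σ_k u_k = v has a unique optimal solution (ū_1,…,ū_n). Moreover, if there exists a feasible tuple with 0 < u_k < p_k for all k, then 0 < ū_k < p_k for all k and there exist reals a, b such that ln(ū_k/(p_k − ū_k)) = a + b·σ_k for every k; if in addition min_k σ_k < max_k σ_k, then a and b are unique. -/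

import Mathlib

/-- The Fermi–Dirac entropy `E_FD : ℝ → ℝ ∪ {+∞}`:
`E_FD(u) = u ln u + (1−u) ln(1−u)` on `[0,1]` (with `0 · ln 0 := 0`, which holds since
`Real.log 0 = 0`) and `+∞` outside `[0,1]`. -/
noncomputable def EFDe (u : ℝ) : EReal :=
  if 0 ≤ u ∧ u ≤ 1 then ((u * Real.log u + (1 - u) * Real.log (1 - u) : ℝ) : EReal) else ⊤

/-- Feasible tuples: nonnegative with `Σ u_k = u` and `Σ σ_k u_k = v`. -/
def FeasFin {n : ℕ} (σ : Fin n → ℝ) (u v : ℝ) (w : Fin n → ℝ) : Prop :=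
  (∀ k, 0 ≤ w k) ∧ (∑ k, w k) = u ∧ (∑ k, σ k * w k) = v

/-- The Fermi–Dirac objective `Σ p_k E_FD(u_k/p_k)`, with values in `ℝ ∪ {+∞}`. -/
noncomputable def objFDFin {n : ℕ} (p : Fin n → ℝ) (w : Fin n → ℝ) : EReal :=
  ∑ k, (p k : EReal) * EFDe (w k / p k)

/-- `w` is an optimal solution of the finite Fermi–Dirac entropy minimization problem. -/
def IsOptFDFin {n : ℕ} (p σ : Fin n → ℝ) (u v : ℝ) (w : Fin n → ℝ) : Prop :=
  FeasFin σ u v w ∧ ∀ w', FeasFin σ u v w' → objFDFin p w ≤ objFDFin p w'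

open Real Set

noncomputable def efd (x : ℝ) : ℝ := x * Real.log x + (1 - x) * Real.log (1 - x)

lemma efd_cont : Continuous efd := by
  unfold efd
  exact (Real.continuous_mul_log).add
    ((Real.continuous_mul_log).comp (continuous_const.sub continuous_id))

lemma efd_zero : efd 0 = 0 := by simp [efd]

lemma efd_one : efd 1 = 0 := by simp [efd]

lemma efd_symm (x : ℝ) : efd (1 - x) = efd x := by
  unfold efd; ring_nf

lemma efd_le {x : ℝ} (h0 : 0 ≤ x) (h1 : x ≤ 1) : efd x ≤ x * Real.log x := by
  have : (1 - x) * Real.log (1 - x) ≤ 0 :=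
    mul_nonpos_of_nonneg_of_nonpos (by linarith) (Real.log_nonpos (by linarith) (by linarith))
  unfold efd; linarith

lemma efd_convex {x y a b : ℝ} (hx0 : 0 ≤ x) (hx1 : x ≤ 1) (hy0 : 0 ≤ y) (hy1 : y ≤ 1)
    (ha : 0 ≤ a) (hb : 0 ≤ b) (hab : a + b = 1) :
    efd (a * x + b * y) ≤ a * efd x + b * efd y := by
  have h1 := Real.convexOn_mul_log.2 (mem_Ici.2 hx0) (mem_Ici.2 hy0) ha hb hab
  have h2 := Real.convexOn_mul_log.2 (mem_Ici.2 (by linarith : (0:ℝ) ≤ 1 - x))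
    (mem_Ici.2 (by linarith : (0:ℝ) ≤ 1 - y)) ha hb hab
  have e1 : a • (1 - x) + b • (1 - y) = 1 - (a • x + b • y) := by
    simp only [smul_eq_mul]; linarith
  rw [e1] at h2
  simp only [smul_eq_mul] at h1 h2 ⊢
  unfold efd; linarith

lemma efd_strict_mid {x y : ℝ} (hx0 : 0 ≤ x) (hx1 : x ≤ 1) (hy0 : 0 ≤ y) (hy1 : y ≤ 1)
    (hxy : x ≠ y) : efd ((x + y)/2) < (efd x + efd y)/2 := by
  have h1 := Real.strictConvexOn_mul_log.2 (mem_Ici.2 hx0) (mem_Ici.2 hy0) hxy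
    (by norm_num : (0:ℝ) < 1/2) (by norm_num : (0:ℝ) < 1/2) (by norm_num)
  have h2 := Real.strictConvexOn_mul_log.2 (mem_Ici.2 (by linarith : (0:ℝ) ≤ 1 - x))
    (mem_Ici.2 (by linarith : (0:ℝ) ≤ 1 - y)) (by intro h; apply hxy; linarith)
    (by norm_num : (0:ℝ) < 1/2) (by norm_num : (0:ℝ) < 1/2) (by norm_num)
  have e1 : (1/2 : ℝ) • (1 - x) + (1/2 : ℝ) • (1 - y) = 1 - (x + y)/2 := by
    simp only [smul_eq_mul]; ring
  rw [e1] at h2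
  have e2 : (1/2 : ℝ) • x + (1/2 : ℝ) • y = (x + y)/2 := by simp only [smul_eq_mul]; ring
  rw [e2] at h1
  simp only [smul_eq_mul] at h1 h2
  unfold efd; linarith

lemma efd_hasDerivAt {x : ℝ} (h0 : 0 < x) (h1 : x < 1) :
    HasDerivAt efd (Real.log x - Real.log (1 - x)) x := by
  have hA : HasDerivAt (fun y : ℝ => y * Real.log y) (Real.log x + 1) x :=
    Real.hasDerivAt_mul_log h0.ne'
  have hB : HasDerivAt (fun y : ℝ => (1 - y) * Real.log (1 - y))
      (-(Real.log (1 - x) + 1)) x := by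
    have h := (Real.hasDerivAt_mul_log (x := 1 - x) (by linarith)).comp x
      ((hasDerivAt_id x).const_sub 1)
    exact h.congr_deriv (by ring)
  have := hA.add hB
  exact this.congr_deriv (by ring)

lemma EFDe_eq {x : ℝ} (h0 : 0 ≤ x) (h1 : x ≤ 1) : EFDe x = ((efd x : ℝ) : EReal) :=
  if_pos ⟨h0, h1⟩

lemma EFDe_top {x : ℝ} (h : 1 < x) : EFDe x = ⊤ := if_neg (by push_neg; intro; linarith)

lemma ereal_sum_ne_bot {ι : Type*} (s : Finset ι) (f : ι → EReal) (h : ∀ i ∈ s, f i ≠ ⊥) :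
    (∑ i ∈ s, f i) ≠ ⊥ := by
  classical
  induction' s using Finset.induction_on with a s ha ih
  · simp
  · rw [Finset.sum_insert ha]
    intro hc
    rcases EReal.add_eq_bot_iff.1 hc with h1 | h2
    · exact h a (Finset.mem_insert_self a s) h1
    · exact ih (fun i hi => h i (Finset.mem_insert_of_mem hi)) h2

lemma ereal_coe_sum {ι : Type*} (s : Finset ι) (f : ι → ℝ) :
    ((∑ i ∈ s, f i : ℝ) : EReal) = ∑ i ∈ s, ((f i : ℝ) : EReal) := by
  classical
  induction' s using Finset.induction_on with a s ha ih
  · simp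
  · rw [Finset.sum_insert ha, Finset.sum_insert ha, EReal.coe_add, ih]

lemma ereal_sum_eq_top {n : ℕ} (f : Fin n → EReal) (h : ∀ i, f i ≠ ⊥) (k : Fin n)
    (hk : f k = ⊤) : (∑ i, f i) = ⊤ := by
  classical
  rw [← Finset.add_sum_erase _ f (Finset.mem_univ k), hk]
  rw [EReal.top_add_iff_ne_bot]
  exact ereal_sum_ne_bot _ _ (fun i _ => h i)

lemma objFDFin_eq {n : ℕ} (p w : Fin n → ℝ) (hp : ∀ k, 0 < p k) (hw : ∀ k, 0 ≤ w k)
    (hwp : ∀ k, w k ≤ p k) :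
    objFDFin p w = ((∑ k, p k * efd (w k / p k) : ℝ) : EReal) := by
  unfold objFDFin
  rw [ereal_coe_sum]
  refine Finset.sum_congr rfl fun k _ => ?_
  rw [EFDe_eq (div_nonneg (hw k) (hp k).le) ((div_le_one (hp k)).2 (hwp k)), ← EReal.coe_mul]

lemma objFDFin_top {n : ℕ} (p w : Fin n → ℝ) (hp : ∀ k, 0 < p k) (hw : ∀ k, 0 ≤ w k)
    (k0 : Fin n) (hk0 : p k0 < w k0) : objFDFin p w = ⊤ := by
  unfold objFDFin
  apply ereal_sum_eq_top
  · intro i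
    by_cases h : 0 ≤ w i / p i ∧ w i / p i ≤ 1
    · rw [EFDe_eq h.1 h.2, ← EReal.coe_mul]; exact EReal.coe_ne_bot _
    · rw [EFDe, if_neg h, EReal.mul_top_of_pos (EReal.coe_pos.2 (hp i))]; exact top_ne_bot
  · rw [EFDe_top ((one_lt_div (hp k0)).2 hk0), EReal.mul_top_of_pos (EReal.coe_pos.2 (hp k0))]

section Main

variable {n : ℕ} (p σ : Fin n → ℝ) (u v : ℝ)

/-- The effective feasible set. -/
def SFD : Set (Fin n → ℝ) := {w | FeasFin σ u v w ∧ ∀ k, w k ≤ p k}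

/-- The real-valued objective. -/
noncomputable def FFD (w : Fin n → ℝ) : ℝ := ∑ k, p k * efd (w k / p k)

lemma FFD_cont : Continuous (FFD p) := by
  apply continuous_finset_sum
  intro k _
  exact continuous_const.mul (efd_cont.comp ((continuous_apply (A := fun _ : Fin n => ℝ) k).div_const (p k)))

lemma SFD_compact : IsCompact (SFD p σ u v) := by
  have h1 : SFD p σ u v = (Set.Icc (0 : Fin n → ℝ) p) ∩
      (((fun w : Fin n → ℝ => ∑ k, w k) ⁻¹' {u}) ∩
       ((fun w : Fin n → ℝ => ∑ k, σ k * w k) ⁻¹' {v})) := by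
    ext w
    simp only [SFD, FeasFin, Set.mem_inter_iff, Set.mem_Icc, Set.mem_preimage,
      Set.mem_singleton_iff, Set.mem_setOf_eq, Pi.le_def]
    constructor
    · rintro ⟨⟨h1', h2, h3⟩, h4⟩; exact ⟨⟨fun k => h1' k, fun k => h4 k⟩, h2, h3⟩
    · rintro ⟨⟨h1', h4⟩, h2, h3⟩; exact ⟨⟨fun k => h1' k, h2, h3⟩, fun k => h4 k⟩
  rw [h1]
  exact isCompact_Icc.inter_right
    ((IsClosed.preimage (continuous_finset_sum _ fun k _ => continuous_apply k)
        isClosed_singleton).inter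
      (IsClosed.preimage (continuous_finset_sum _ fun k _ =>
        continuous_const.mul (continuous_apply k)) isClosed_singleton))

end Main

theorem stmt3 (n : ℕ) (hn : 2 ≤ n) (p σ : Fin n → ℝ) (hp : ∀ k, 1 ≤ p k)
    (u v : ℝ) (hu : 0 ≤ u)
    (hfeas : ∃ w : Fin n → ℝ, FeasFin σ u v w ∧ ∀ k, w k ≤ p k) :
    ∃ wbar : Fin n → ℝ, IsOptFDFin p σ u v wbar ∧
      (∀ w, IsOptFDFin p σ u v w → w = wbar) ∧
      ((∃ w : Fin n → ℝ, FeasFin σ u v w ∧ ∀ k, 0 < w k ∧ w k < p k) →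
        ((∀ k, 0 < wbar k ∧ wbar k < p k) ∧
          ∃ ab : ℝ × ℝ,
            (∀ k, Real.log (wbar k / (p k - wbar k)) = ab.1 + ab.2 * σ k) ∧
            ((∃ i j, σ i ≠ σ j) → ∀ ab' : ℝ × ℝ,
              (∀ k, Real.log (wbar k / (p k - wbar k)) = ab'.1 + ab'.2 * σ k) → ab' = ab))) := by
  have hp0 : ∀ k, 0 < p k := fun k => lt_of_lt_of_le one_pos (hp k)
  obtain ⟨w0, hw0f, hw0p⟩ := hfeas
  have hw0S : w0 ∈ SFD p σ u v := ⟨hw0f, hw0p⟩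
  -- existence of a minimizer of FFD on SFD
  obtain ⟨wbar, hwbarS, hmin⟩ := (SFD_compact p σ u v).exists_isMinOn ⟨w0, hw0S⟩
    ((FFD_cont p).continuousOn)
  -- obj on S equals coe of FFD
  have hobj : ∀ w ∈ SFD p σ u v, objFDFin p w = ((FFD p w : ℝ) : EReal) := by
    intro w hw
    exact objFDFin_eq p w hp0 hw.1.1 hw.2
  -- optimality in the EReal sense
  have hopt : IsOptFDFin p σ u v wbar := by
    refine ⟨hwbarS.1, fun w' hw' => ?_⟩
    by_cases hle : ∀ k, w' k ≤ p k
    · rw [hobj wbar hwbarS, hobj w' ⟨hw', hle⟩, EReal.coe_le_coe_iff]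
      exact hmin ⟨hw', hle⟩
    · push_neg at hle
      obtain ⟨k0, hk0⟩ := hle
      rw [objFDFin_top p w' hp0 hw'.1 k0 hk0]
      exact le_top
  -- optimal points lie in S and minimize FFD on S
  have hoptS : ∀ w, IsOptFDFin p σ u v w → w ∈ SFD p σ u v ∧ FFD p w = FFD p wbar := by
    intro w hw
    have hwp : ∀ k, w k ≤ p k := by
      by_contra hle
      push_neg at hle
      obtain ⟨k0, hk0⟩ := hle
      have h1 := hw.2 w0 hw0f
      rw [objFDFin_top p w hp0 hw.1.1 k0 hk0, hobj w0 hw0S, top_le_iff] at h1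
      exact (EReal.coe_ne_top _) h1
    have hwS : w ∈ SFD p σ u v := ⟨hw.1, hwp⟩
    refine ⟨hwS, le_antisymm ?_ (hmin hwS)⟩
    have h2 := hw.2 wbar hwbarS.1
    rw [hobj w hwS, hobj wbar hwbarS] at h2
    exact EReal.coe_le_coe_iff.1 h2
  refine ⟨wbar, hopt, ?_, ?_⟩
  · -- uniqueness
    intro w hw
    obtain ⟨hwS, hFeq⟩ := hoptS w hw
    by_contra hne
    obtain ⟨k0, hk0⟩ : ∃ k, w k ≠ wbar k := Function.ne_iff.1 hne
    set m : Fin n → ℝ := fun k => (w k + wbar k) / 2 with hm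
    have hmS : m ∈ SFD p σ u v := by
      refine ⟨⟨fun k => by have := hwS.1.1 k; have := hwbarS.1.1 k; simp only [hm]; linarith,
        ?_, ?_⟩, fun k => ?_⟩
      · have : ∑ k, m k = ((∑ k, w k) + ∑ k, wbar k) / 2 := by
          rw [← Finset.sum_div, ← Finset.sum_add_distrib]
        rw [this, hwS.1.2.1, hwbarS.1.2.1]; ring
      · have : ∑ k, σ k * m k = ((∑ k, σ k * w k) + ∑ k, σ k * wbar k) / 2 := by
          have e1 : ∀ k, σ k * m k = (σ k * w k + σ k * wbar k) / 2 := by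
            intro k; simp only [hm]; ring
          rw [Finset.sum_congr rfl fun k _ => e1 k, ← Finset.sum_div,
            ← Finset.sum_add_distrib]
        rw [this, hwS.1.2.2, hwbarS.1.2.2]; ring
      · have := hwS.2 k; have := hwbarS.2 k; simp only [hm]; linarith
    have hbounds : ∀ (w' : Fin n → ℝ), w' ∈ SFD p σ u v → ∀ k,
        0 ≤ w' k / p k ∧ w' k / p k ≤ 1 := fun w' hw' k =>
      ⟨div_nonneg (hw'.1.1 k) (hp0 k).le, (div_le_one (hp0 k)).2 (hw'.2 k)⟩
    have hmid : ∀ k, m k / p k = (w k / p k + wbar k / p k) / 2 := by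
      intro k; simp only [hm]; field_simp
    have key : FFD p m < (FFD p w + FFD p wbar) / 2 := by
      have hrhs : (FFD p w + FFD p wbar) / 2 =
          ∑ k, p k * ((efd (w k / p k) + efd (wbar k / p k)) / 2) := by
        unfold FFD
        rw [← Finset.sum_add_distrib, Finset.sum_div]
        exact Finset.sum_congr rfl fun k _ => by ring
      rw [hrhs]
      unfold FFD
      apply Finset.sum_lt_sum
      · intro k _
        rw [hmid k]
        refine mul_le_mul_of_nonneg_left ?_ (hp0 k).le
        obtain ⟨hx0, hx1⟩ := hbounds w hwS k
        obtain ⟨hy0, hy1⟩ := hbounds wbar hwbarS k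
        have := efd_convex hx0 hx1 hy0 hy1 (by norm_num : (0:ℝ) ≤ 1/2)
          (by norm_num : (0:ℝ) ≤ 1/2) (by norm_num)
        calc efd ((w k / p k + wbar k / p k) / 2)
            = efd (1/2 * (w k / p k) + 1/2 * (wbar k / p k)) := by ring_nf
          _ ≤ 1/2 * efd (w k / p k) + 1/2 * efd (wbar k / p k) := this
          _ = (efd (w k / p k) + efd (wbar k / p k)) / 2 := by ring
      · refine ⟨k0, Finset.mem_univ k0, ?_⟩
        rw [hmid k0]
        refine mul_lt_mul_of_pos_left ?_ (hp0 k0)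
        obtain ⟨hx0, hx1⟩ := hbounds w hwS k0
        obtain ⟨hy0, hy1⟩ := hbounds wbar hwbarS k0
        refine efd_strict_mid hx0 hx1 hy0 hy1 fun h => hk0 ?_
        rw [div_eq_div_iff (hp0 k0).ne' (hp0 k0).ne'] at h
        exact mul_right_cancel₀ (hp0 k0).ne' h
    have := hmin hmS
    simp only [IsMinOn, IsMinFilter] at this
    have h2 : FFD p wbar ≤ FFD p m := hmin hmS
    rw [hFeq] at key
    linarith
  · -- interior + multipliers
    rintro ⟨wi, hwif, hwi⟩
    have hwiS : wi ∈ SFD p σ u v := ⟨hwif, fun k => (hwi k).2.le⟩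
    -- Step A: the minimizer is interior
    have hint : ∀ k, 0 < wbar k ∧ wbar k < p k := by
      by_contra hcon
      push_neg at hcon
      obtain ⟨k0, hk0⟩ := hcon
      have hbdry : wbar k0 = 0 ∨ wbar k0 = p k0 := by
        rcases le_or_gt (wbar k0) 0 with h | h
        · exact Or.inl (le_antisymm h (hwbarS.1.1 k0))
        · exact Or.inr (le_antisymm (hwbarS.2 k0) (hk0 h))
      -- the segment from wbar towards wi
      set c : Fin n → ℝ := fun k => wbar k / p k with hc
      set d : Fin n → ℝ := fun k => (wi k - wbar k) / p k with hd
      have hc01 : ∀ k, 0 ≤ c k ∧ c k ≤ 1 := fun k =>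
        ⟨div_nonneg (hwbarS.1.1 k) (hp0 k).le, (div_le_one (hp0 k)).2 (hwbarS.2 k)⟩
      have hcd01 : ∀ k, 0 < c k + d k ∧ c k + d k < 1 := by
        intro k
        have : c k + d k = wi k / p k := by simp only [hc, hd]; ring
        rw [this]
        exact ⟨div_pos (hwi k).1 (hp0 k), (div_lt_one (hp0 k)).2 (hwi k).2⟩
      -- boundary coefficient
      obtain ⟨d0, hd00, hd01, hbd⟩ :
          ∃ d0 : ℝ, 0 < d0 ∧ d0 < 1 ∧ ∀ t : ℝ, 0 < t → t < 1 →
            p k0 * (efd (c k0 + t * d k0) - efd (c k0)) ≤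
              p k0 * d0 * (Real.log t + Real.log d0) * t := by
        rcases hbdry with h0 | h1
        · have hck : c k0 = 0 := by simp [hc, h0]
          have hdpos : 0 < d k0 := by have := (hcd01 k0).1; rw [hck] at this; linarith
          have hdlt : d k0 < 1 := by have := (hcd01 k0).2; rw [hck] at this; linarith
          refine ⟨d k0, hdpos, hdlt, fun t ht0 ht1 => ?_⟩
          rw [hck, efd_zero, sub_zero, zero_add]
          have htd0 : 0 ≤ t * d k0 := mul_nonneg ht0.le hdpos.le
          have htd1 : t * d k0 ≤ 1 := by nlinarith
          have h2 : efd (t * d k0) ≤ t * d k0 * Real.log (t * d k0) := efd_le htd0 htd1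
          have h3 : Real.log (t * d k0) = Real.log t + Real.log (d k0) :=
            Real.log_mul ht0.ne' hdpos.ne' 
          calc p k0 * efd (t * d k0) ≤ p k0 * (t * d k0 * Real.log (t * d k0)) :=
                mul_le_mul_of_nonneg_left h2 (hp0 k0).le
            _ = p k0 * d k0 * (Real.log t + Real.log (d k0)) * t := by rw [h3]; ring
        · refine ⟨-(d k0), ?_, ?_, fun t ht0 ht1 => ?_⟩
          · have : c k0 = 1 := by simp only [hc]; rw [h1, div_self (hp0 k0).ne']
            nlinarith [(hcd01 k0).2]
          · have : c k0 = 1 := by simp only [hc]; rw [h1, div_self (hp0 k0).ne']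
            nlinarith [(hcd01 k0).1]
          · have hck : c k0 = 1 := by simp only [hc]; rw [h1, div_self (hp0 k0).ne']
            have hd0 : 0 < -(d k0) := by nlinarith [(hcd01 k0).2]
            have hd1 : -(d k0) < 1 := by nlinarith [(hcd01 k0).1]
            have he : c k0 + t * d k0 = 1 - t * -(d k0) := by rw [hck]; ring
            rw [he, efd_symm, hck, efd_one, sub_zero]
            have htd0 : 0 ≤ t * -(d k0) := by positivity
            have htd1 : t * -(d k0) ≤ 1 := by nlinarith
            have h2 : efd (t * -(d k0)) ≤ t * -(d k0) * Real.log (t * -(d k0)) :=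
              efd_le htd0 htd1
            have h3 : Real.log (t * -(d k0)) = Real.log t + Real.log (-(d k0)) :=
              Real.log_mul ht0.ne' hd0.ne'
            calc p k0 * efd (t * -(d k0))
                ≤ p k0 * (t * -(d k0) * Real.log (t * -(d k0))) :=
                  mul_le_mul_of_nonneg_left h2 (hp0 k0).le
              _ = p k0 * -(d k0) * (Real.log t + Real.log (-(d k0))) * t := by rw [h3]; ring
      set P : ℝ := p k0 * d0 with hP
      have hPpos : 0 < P := mul_pos (hp0 k0) hd00
      set A : ℝ := (∑ k ∈ Finset.univ.erase k0, p k * (efd (c k + d k) - efd (c k)))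
        + P * Real.log d0 with hA
      set t : ℝ := Real.exp (min (-1) (-(A + 1) / P)) with htdef
      have ht0 : 0 < t := Real.exp_pos _
      have ht1 : t < 1 := by
        rw [htdef]
        calc Real.exp (min (-1) (-(A + 1) / P)) ≤ Real.exp (-1) :=
              Real.exp_le_exp.2 (min_le_left _ _)
          _ < 1 := by rw [Real.exp_lt_one_iff]; norm_num
      have hlogt : Real.log t = min (-1) (-(A + 1) / P) := by rw [htdef, Real.log_exp]
      -- the point wt
      set wt : Fin n → ℝ := fun k => wbar k + t * (wi k - wbar k) with hwt
      have hwtS : wt ∈ SFD p σ u v := by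
        refine ⟨⟨fun k => ?_, ?_, ?_⟩, fun k => ?_⟩
        · have h1 := hwbarS.1.1 k; have h2 := (hwi k).1
          simp only [hwt]; nlinarith
        · have : ∑ k, wt k = (∑ k, wbar k) + t * ((∑ k, wi k) - ∑ k, wbar k) := by
            simp only [hwt]
            rw [Finset.sum_add_distrib, ← Finset.mul_sum, Finset.sum_sub_distrib]
          rw [this, hwbarS.1.2.1, hwif.2.1]; ring
        · have e1 : ∀ k, σ k * wt k = σ k * wbar k + t * (σ k * wi k - σ k * wbar k) :=
            fun k => by simp only [hwt]; ring
          have : ∑ k, σ k * wt k =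
              (∑ k, σ k * wbar k) + t * ((∑ k, σ k * wi k) - ∑ k, σ k * wbar k) := by
            rw [Finset.sum_congr rfl fun k _ => e1 k, Finset.sum_add_distrib,
              ← Finset.mul_sum, Finset.sum_sub_distrib]
          rw [this, hwbarS.1.2.2, hwif.2.2]; ring
        · have h1 := hwbarS.2 k; have h2 := (hwi k).2
          simp only [hwt]; nlinarith
      have hwtc : ∀ k, wt k / p k = c k + t * d k := by
        intro k; simp only [hwt, hc, hd]; field_simp
      -- convexity bound on each coordinate
      have hconvb : ∀ k, p k * (efd (c k + t * d k) - efd (c k)) ≤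
          t * (p k * (efd (c k + d k) - efd (c k))) := by
        intro k
        have h1 := efd_convex (hc01 k).1 (hc01 k).2 (hcd01 k).1.le (hcd01 k).2.le
          (by linarith : (0:ℝ) ≤ 1 - t) ht0.le (by ring)
        have he : (1 - t) * c k + t * (c k + d k) = c k + t * d k := by ring
        rw [he] at h1
        nlinarith [hp0 k]
      -- assemble
      have hmain : FFD p wt - FFD p wbar ≤ t * (A + P * Real.log t) - t * (P * Real.log d0)
          + P * (Real.log t + Real.log d0) * t - t * (P * Real.log t) := by
        have hsplit : FFD p wt - FFD p wbar =
            ∑ k, p k * (efd (c k + t * d k) - efd (c k)) := by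
          unfold FFD
          rw [← Finset.sum_sub_distrib]
          refine Finset.sum_congr rfl fun k _ => ?_
          rw [hwtc k]; simp only [hc]; ring
        rw [hsplit, ← Finset.add_sum_erase _ _ (Finset.mem_univ k0)]
        have h2 : ∑ k ∈ Finset.univ.erase k0, p k * (efd (c k + t * d k) - efd (c k)) ≤
            ∑ k ∈ Finset.univ.erase k0, t * (p k * (efd (c k + d k) - efd (c k))) :=
          Finset.sum_le_sum fun k _ => hconvb k
        have h3 := hbd t ht0 ht1
        rw [← Finset.mul_sum] at h2
        have : t * (A + P * Real.log t) - t * (P * Real.log d0) - t * (P * Real.log t) =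
            t * (∑ k ∈ Finset.univ.erase k0, p k * (efd (c k + d k) - efd (c k))) := by
          rw [hA]; ring
        have h3' : p k0 * (efd (c k0 + t * d k0) - efd (c k0)) ≤
            P * (Real.log t + Real.log d0) * t := by rw [hP]; exact h3
        linarith
      have hneg : FFD p wt - FFD p wbar < 0 := by
        have h4 : A + P * Real.log t ≤ -1 := by
          have : P * Real.log t ≤ -(A + 1) := by
            rw [hlogt]
            have h5 : min (-1) (-(A + 1) / P) ≤ -(A + 1) / P := min_le_right _ _
            calc P * min (-1) (-(A + 1) / P) ≤ P * (-(A + 1) / P) :=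
                  mul_le_mul_of_nonneg_left h5 hPpos.le
              _ = -(A + 1) := by field_simp
          linarith
        have h6 : t * (A + P * Real.log t) ≤ -t := by nlinarith
        nlinarith [hmain]
      have := hmin hwtS
      have h7 : FFD p wbar ≤ FFD p wt := hmin hwtS
      linarith
    refine ⟨hint, ?_⟩
    -- Step B : stationarity
    set g : Fin n → ℝ := fun k => Real.log (wbar k / (p k - wbar k)) with hg
    have hstat : ∀ h : Fin n → ℝ, (∑ k, h k) = 0 → (∑ k, σ k * h k) = 0 →
        (∑ k, g k * h k) = 0 := by
      intro h hsum hssum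
      have hev : ∀ᶠ t : ℝ in nhds 0, ∀ k, 0 < wbar k + t * h k ∧ wbar k + t * h k < p k := by
        rw [Filter.eventually_all]
        intro k
        have hc : Continuous fun t : ℝ => wbar k + t * h k := by continuity
        have h1 : ∀ᶠ t : ℝ in nhds 0, (wbar k + t * h k) ∈ Set.Ioo 0 (p k) := by
          apply hc.continuousAt.eventually_mem
          apply isOpen_Ioo.mem_nhds
          simpa using ⟨(hint k).1, (hint k).2⟩
        filter_upwards [h1] with t ht using ⟨ht.1, ht.2⟩
      set ψ : ℝ → ℝ := fun t => FFD p (fun k => wbar k + t * h k) with hψ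
      have hψ0 : ψ 0 = FFD p wbar := by simp [hψ]
      have hlocmin : IsLocalMin ψ 0 := by
        rw [IsLocalMin, IsMinFilter, hψ0]
        filter_upwards [hev] with t ht
        have hwtS : (fun k => wbar k + t * h k) ∈ SFD p σ u v := by
          refine ⟨⟨fun k => (ht k).1.le, ?_, ?_⟩, fun k => (ht k).2.le⟩
          · have : ∑ k, (wbar k + t * h k) = (∑ k, wbar k) + t * ∑ k, h k := by
              rw [Finset.sum_add_distrib, Finset.mul_sum]
            rw [this, hsum, hwbarS.1.2.1]; ring
          · have : ∑ k, σ k * (wbar k + t * h k) =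
                (∑ k, σ k * wbar k) + t * ∑ k, σ k * h k := by
              rw [Finset.mul_sum, ← Finset.sum_add_distrib]
              exact Finset.sum_congr rfl fun k _ => by ring
            rw [this, hssum, hwbarS.1.2.2]; ring
        exact hmin hwtS
      have hderiv : HasDerivAt ψ (∑ k, g k * h k) 0 := by
        rw [hψ]
        unfold FFD
        apply HasDerivAt.fun_sum
        intro k _
        have hck0 : 0 < wbar k / p k := div_pos (hint k).1 (hp0 k)
        have hck1 : wbar k / p k < 1 := (div_lt_one (hp0 k)).2 (hint k).2
        have h1 : HasDerivAt (fun t : ℝ => t * h k) (h k) 0 := by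
          simpa using (hasDerivAt_id (0:ℝ)).mul_const (h k)
        have hinner : HasDerivAt (fun t : ℝ => (wbar k + t * h k) / p k) (h k / p k) 0 :=
          (h1.const_add (wbar k)).div_const (p k)
        have he : HasDerivAt efd (Real.log (wbar k / p k) - Real.log (1 - wbar k / p k))
            ((fun t : ℝ => (wbar k + t * h k) / p k) 0) := by
          rw [show (fun t : ℝ => (wbar k + t * h k) / p k) 0 = wbar k / p k by norm_num]
          exact efd_hasDerivAt hck0 hck1
        have hcomp := (he.comp 0 hinner).const_mul (p k)
        have hpk : p k - wbar k ≠ 0 := (sub_pos.2 (hint k).2).ne'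
        have e2 : p k * ((Real.log (wbar k / p k) - Real.log (1 - wbar k / p k)) * (h k / p k))
            = g k * h k := by
          have e1 : 1 - wbar k / p k = (p k - wbar k) / p k := by
            rw [eq_div_iff (hp0 k).ne', sub_mul, div_mul_cancel₀ _ (hp0 k).ne', one_mul]
          have eA : Real.log (wbar k / p k) - Real.log (1 - wbar k / p k)
              = Real.log (wbar k / (p k - wbar k)) := by
            rw [e1, Real.log_div (hint k).1.ne' (hp0 k).ne', Real.log_div hpk (hp0 k).ne',
              Real.log_div (hint k).1.ne' hpk]
            ring
          rw [mul_comm (p k), mul_assoc, div_mul_cancel₀ _ (hp0 k).ne', eA]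
        rw [← e2]
        simpa [Function.comp] using hcomp
      have := hlocmin.hasDerivAt_eq_zero hderiv
      exact this
    -- Step C : g lies in the span of 1 and σ
    have hspan : ∃ a b : ℝ, ∀ k, g k = a + b * σ k := by
      let One : EuclideanSpace ℝ (Fin n) := WithLp.toLp 2 (fun _ => 1)
      let Sig : EuclideanSpace ℝ (Fin n) := WithLp.toLp 2 σ
      let G : EuclideanSpace ℝ (Fin n) := WithLp.toLp 2 g
      set K : Submodule ℝ (EuclideanSpace ℝ (Fin n)) :=
        Submodule.span ℝ ({One, Sig} : Set (EuclideanSpace ℝ (Fin n))) with hK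
      have hGmem : G ∈ Kᗮᗮ := by
        rw [Submodule.mem_orthogonal]
        intro h hh
        rw [Submodule.mem_orthogonal] at hh
        have h1 : inner ℝ One h = (0:ℝ) :=
          hh One (Submodule.subset_span (Set.mem_insert _ _))
        have h2 : inner ℝ Sig h = (0:ℝ) :=
          hh Sig (Submodule.subset_span (Set.mem_insert_of_mem _ rfl))
        simp only [PiLp.inner_apply, RCLike.inner_apply, conj_trivial] at h1 h2 ⊢
        have e1 : (∑ k, h k) = 0 := by
          rw [← h1]; exact Finset.sum_congr rfl fun k _ => by simp [One]
        have e2 : (∑ k, σ k * h k) = 0 := by rw [← h2]; exact Finset.sum_congr rfl fun k _ => mul_comm _ _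
        have := hstat h e1 e2
        rw [← this]
      rw [Submodule.orthogonal_orthogonal] at hGmem
      rw [hK, Submodule.mem_span_pair] at hGmem
      obtain ⟨a, b, hab⟩ := hGmem
      refine ⟨a, b, fun k => ?_⟩
      have h5 := congrArg (fun x : EuclideanSpace ℝ (Fin n) => x k) hab
      have h6 : a * 1 + b * σ k = g k := by
        simpa [One, Sig, G, Pi.add_apply, Pi.smul_apply, smul_eq_mul] using h5
      rw [← h6]; ring
    obtain ⟨a, b, hab⟩ := hspan
    refine ⟨(a, b), fun k => by simpa using hab k, ?_⟩
    -- Step D : uniqueness of (a, b)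
    rintro ⟨i, j, hij⟩ ab' hab'
    have hi := (hab' i).symm.trans (hab i)
    have hj := (hab' j).symm.trans (hab j)
    have hb : ab'.2 = b := by
      by_contra hbne
      apply hij
      have : (ab'.2 - b) * σ i = (ab'.2 - b) * σ j := by linarith
      have := mul_left_cancel₀ (sub_ne_zero.2 hbne) this
      linarith
    have ha : ab'.1 = a := by rw [hb] at hi; linarith
    exact Prod.ext ha hb
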